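/- Let x ∈ (0,1), α > 0, n ≥ 1 an integer, and let {B_1,…,B_H} be any partition of {1,…,n} into H nonempty blocks with sizes n_h = #B_h. On a probability space let E_1,…,E_n, G* be jointly independent real random variables with E_i distributed Gamma(1, 1) (i.e., standard exponential) and G* distributed Gamma(α, 1). Set T = G* + Σ_{i=1}^n E_i, w_i = E_i/T for i ∈ {1,…,n}, and π_h = (Σ_{i ∈ B_h} E_i)/T for h ∈ {1,…,H}. Then E[ ∏_{i=1}^n max(1 − x/w_i, 0) ] ≤ E[ ∏_{h=1}^H (max(1 − x/π_h, 0))^{n_h} ]. (Equivalently: among all partitions of [n], the singleton partition yields the lowest survival probability P(u_min > x) of the minimum slice variable under the Dirichlet posterior law of the weights.) -/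

import Mathlib

open MeasureTheory ProbabilityTheory

lemma gamma_nonpos (a r : ℝ) : gammaMeasure a r (Set.Iic 0) = 0 := by
  rw [gammaMeasure, withDensity_apply _ measurableSet_Iic,
    setLIntegral_congr Iio_ae_eq_Iic.symm]
  rw [setLIntegral_congr_fun measurableSet_Iio
    (fun y (hy : y < 0) => gammaPDF_of_neg hy)]
  simp

/-- The singleton partition yields the lowest survival probability of the minimum
slice variable, via the Gamma representation: with `E_1, …, E_n ~ Gamma(1,1)`
(standard exponential), `G* ~ Gamma(α, 1)` jointly independent, `T = G* + Σ_i E_i`,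
`w_i = E_i / T`, and block weights `π_h = (Σ_{i ∈ B_h} E_i)/T` for a partition
`{B_1, …, B_H}` of `{1, …, n}` into nonempty blocks:
`E[∏_i (1 − x/w_i)₊] ≤ E[∏_h ((1 − x/π_h)₊)^{#B_h}]`. -/
theorem stmt1 {Ω : Type*} [MeasurableSpace Ω] (P : Measure Ω) [IsProbabilityMeasure P]
    (x α : ℝ) (hx : x ∈ Set.Ioo (0:ℝ) 1) (hα : 0 < α)
    (n H : ℕ) (hn : 1 ≤ n) (hH : 1 ≤ H)
    (B : Fin H → Finset (Fin n))
    (hBne : ∀ h, (B h).Nonempty)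
    (hBdisj : ∀ h h', h ≠ h' → Disjoint (B h) (B h'))
    (hBcover : ∀ i, ∃ h, i ∈ B h)
    (E : Fin n → Ω → ℝ) (Gstar : Ω → ℝ)
    (hEm : ∀ i, Measurable (E i)) (hGsm : Measurable Gstar)
    (hindep : iIndepFun
      (fun j : Option (Fin n) => Option.elim j Gstar E) P)
    (hEd : ∀ i, Measure.map (E i) P = gammaMeasure 1 1)
    (hGsd : Measure.map Gstar P = gammaMeasure α 1) :
    (∫ ω, ∏ i, max (1 - x / (E i ω / (Gstar ω + ∑ j, E j ω))) 0 ∂P)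
      ≤ ∫ ω, ∏ h,
          (max (1 - x / ((∑ i ∈ B h, E i ω) / (Gstar ω + ∑ j, E j ω))) 0) ^ (B h).card ∂P := by
  obtain ⟨hx0, hx1⟩ := hx
  -- a.e. positivity
  have hEpos : ∀ i, ∀ᵐ ω ∂P, 0 < E i ω := by
    intro i
    have : P ((E i) ⁻¹' Set.Iic 0) = 0 := by
      rw [← Measure.map_apply (hEm i) measurableSet_Iic, hEd i, gamma_nonpos]
    filter_upwards [measure_eq_zero_iff_ae_notMem.mp this] with ω h
    simpa using h
  have hGpos : ∀ᵐ ω ∂P, 0 < Gstar ω := by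
    have : P (Gstar ⁻¹' Set.Iic 0) = 0 := by
      rw [← Measure.map_apply hGsm measurableSet_Iic, hGsd, gamma_nonpos]
    filter_upwards [measure_eq_zero_iff_ae_notMem.mp this] with ω h
    simpa using h
  have hpos : ∀ᵐ ω ∂P, (0 < Gstar ω ∧ ∀ i, 0 < E i ω) :=
    hGpos.and ((ae_all_iff).mpr hEpos)
  -- measurability of integrands
  have hTm : Measurable (fun ω => Gstar ω + ∑ j, E j ω) :=
    hGsm.add (Finset.measurable_sum _ fun j _ => hEm j)
  have hLm : Measurable (fun ω => ∏ i, max (1 - x / (E i ω / (Gstar ω + ∑ j, E j ω))) 0) :=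
    Finset.measurable_prod _ fun i _ =>
      (measurable_const.sub (measurable_const.div ((hEm i).div hTm))).max measurable_const
  have hRm : Measurable (fun ω => ∏ h,
      (max (1 - x / ((∑ i ∈ B h, E i ω) / (Gstar ω + ∑ j, E j ω))) 0) ^ (B h).card) :=
    Finset.measurable_prod _ fun h _ =>
      ((measurable_const.sub (measurable_const.div
        ((Finset.measurable_sum _ fun i _ => hEm i).div hTm))).max measurable_const).pow_const _
  -- pointwise facts on the good set
  have key : ∀ᵐ ω ∂P,
      (∏ i, max (1 - x / (E i ω / (Gstar ω + ∑ j, E j ω))) 0) ∈ Set.Icc (0:ℝ) 1 ∧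
      (∏ h, (max (1 - x / ((∑ i ∈ B h, E i ω) / (Gstar ω + ∑ j, E j ω))) 0) ^ (B h).card)
        ∈ Set.Icc (0:ℝ) 1 ∧
      (∏ i, max (1 - x / (E i ω / (Gstar ω + ∑ j, E j ω))) 0) ≤
        ∏ h, (max (1 - x / ((∑ i ∈ B h, E i ω) / (Gstar ω + ∑ j, E j ω))) 0) ^ (B h).card := by
    filter_upwards [hpos] with ω hω
    obtain ⟨hG, hE⟩ := hω
    set T := Gstar ω + ∑ j, E j ω with hT
    have hTpos : 0 < T := by
      have : 0 ≤ ∑ j, E j ω := Finset.sum_nonneg fun j _ => (hE j).le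
      linarith
    have hfmem : ∀ i : Fin n, max (1 - x / (E i ω / T)) 0 ∈ Set.Icc (0:ℝ) 1 := by
      intro i
      constructor
      · exact le_max_right _ _
      · have hw : 0 < E i ω / T := div_pos (hE i) hTpos
        have : 0 ≤ x / (E i ω / T) := le_of_lt (div_pos hx0 hw)
        simp only [max_le_iff]
        constructor <;> linarith
    have hgmem : ∀ h : Fin H, max (1 - x / ((∑ i ∈ B h, E i ω) / T)) 0 ∈ Set.Icc (0:ℝ) 1 := by
      intro h
      constructor
      · exact le_max_right _ _
      · have hS : 0 < ∑ i ∈ B h, E i ω :=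
          Finset.sum_pos (fun i _ => hE i) (hBne h)
        have hw : 0 < (∑ i ∈ B h, E i ω) / T := div_pos hS hTpos
        have : 0 ≤ x / ((∑ i ∈ B h, E i ω) / T) := le_of_lt (div_pos hx0 hw)
        simp only [max_le_iff]
        constructor <;> linarith
    have hfg : ∀ h : Fin H, ∀ i ∈ B h,
        max (1 - x / (E i ω / T)) 0 ≤ max (1 - x / ((∑ i ∈ B h, E i ω) / T)) 0 := by
      intro h i hi
      have hS : E i ω ≤ ∑ j ∈ B h, E j ω :=
        Finset.single_le_sum (fun j _ => (hE j).le) hi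
      have hwi : 0 < E i ω / T := div_pos (hE i) hTpos
      have hle : E i ω / T ≤ (∑ j ∈ B h, E j ω) / T :=
        div_le_div_of_nonneg_right hS hTpos.le
      have : x / ((∑ j ∈ B h, E j ω) / T) ≤ x / (E i ω / T) :=
        div_le_div_of_nonneg_left hx0.le hwi hle
      exact max_le_max (by linarith) le_rfl
    refine ⟨⟨Finset.prod_nonneg fun i _ => (hfmem i).1,
        Finset.prod_le_one (fun i _ => (hfmem i).1) (fun i _ => (hfmem i).2)⟩,
      ⟨Finset.prod_nonneg fun h _ => pow_nonneg (hgmem h).1 _,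
        Finset.prod_le_one (fun h _ => pow_nonneg (hgmem h).1 _)
          (fun h _ => pow_le_one₀ (hgmem h).1 (hgmem h).2)⟩, ?_⟩
    have hunion : (Finset.univ : Finset (Fin n)) = Finset.univ.biUnion B := by
      ext i
      simp only [Finset.mem_univ, Finset.mem_biUnion, true_iff, true_and]
      exact hBcover i
    calc ∏ i, max (1 - x / (E i ω / T)) 0
        = ∏ h, ∏ i ∈ B h, max (1 - x / (E i ω / T)) 0 := by
          rw [hunion, Finset.prod_biUnion]
          intro h _ h' _ hne
          exact hBdisj h h' hne
      _ ≤ ∏ h, (max (1 - x / ((∑ i ∈ B h, E i ω) / T)) 0) ^ (B h).card := by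
          refine Finset.prod_le_prod (fun h _ => Finset.prod_nonneg fun i _ => (hfmem i).1)
            (fun h _ => ?_)
          rw [← Finset.prod_const]
          exact Finset.prod_le_prod (fun i _ => (hfmem i).1) (hfg h)
  -- integrability
  have hLint : Integrable (fun ω => ∏ i, max (1 - x / (E i ω / (Gstar ω + ∑ j, E j ω))) 0) P := by
    refine Integrable.mono' (integrable_const 1) hLm.aestronglyMeasurable ?_
    filter_upwards [key] with ω ⟨⟨h0, h1⟩, _, _⟩
    rw [Real.norm_eq_abs, abs_of_nonneg h0]; exact h1
  have hRint : Integrable (fun ω => ∏ h,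
      (max (1 - x / ((∑ i ∈ B h, E i ω) / (Gstar ω + ∑ j, E j ω))) 0) ^ (B h).card) P := by
    refine Integrable.mono' (integrable_const 1) hRm.aestronglyMeasurable ?_
    filter_upwards [key] with ω ⟨_, ⟨h0, h1⟩, _⟩
    rw [Real.norm_eq_abs, abs_of_nonneg h0]; exact h1
  refine integral_mono_ae hLint hRint ?_
  filter_upwards [key] with ω ⟨_, _, h⟩
  exact h
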